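/- Let (X_i)_{i≥1} be a (χ,ρ)-attachment sequence. Then for every N ≥ 1 and every acceptable sequence (x_1,…,x_N) with counts N_k := #{i ≤ N : x_i = k} and maximal label d := max_{i≤N} x_i, one has ℙ((X_1,…,X_N) = (x_1,…,x_N)) = [∏_{j=0}^{d−1} (jχ + ρ) · ∏_{k=1}^{d} ∏_{l=1}^{N_k − 1} (l − χ)] / ∏_{n=0}^{N−1} (n + ρ). In particular this probability depends on (x_1,…,x_N) only through the counts (N_k)_{k=1}^d. -/

import Mathlib

open MeasureTheory Finset

/-- A finite sequence `(x 0, …, x (n-1))` of positive integers is *acceptable* if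
`x 0 = 1` and each subsequent entry exceeds the current maximum by at most one
(equivalently, the first occurrence of `k+1` comes strictly after the first
occurrence of `k`). -/
def Acceptable (n : ℕ) (x : ℕ → ℕ) : Prop :=
  (∀ i < n, 1 ≤ x i) ∧ (0 < n → x 0 = 1) ∧
    ∀ i, i + 1 < n → x (i + 1) ≤ 1 + (Finset.range (i + 1)).sup x

/-- `cnt n x k` is the number of indices `i < n` with `x i = k`. -/
def cnt (n : ℕ) (x : ℕ → ℕ) (k : ℕ) : ℕ :=
  ((Finset.range n).filter fun i => x i = k).card

/-- `dmax n x` is the largest label among `x 0, …, x (n-1)`. -/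
def dmax (n : ℕ) (x : ℕ → ℕ) : ℕ :=
  (Finset.range n).sup x

/-- A `(χ,ρ)`-attachment sequence: a sequence of positive-integer valued random
variables encoding the linear preferential attachment tree with weights
`w_k = χ k + ρ`; `X i` is the index, in order of appearance, of the principal
subtree containing the `(i+2)`nd node. -/
def IsAttachmentSeq {Ω : Type*} [MeasurableSpace Ω] (μ : Measure Ω) (χ ρ : ℝ)
    (X : ℕ → Ω → ℕ) : Prop :=
  (∀ i, Measurable (X i)) ∧
  μ {ω | X 0 ω = 1} = 1 ∧
  ∀ n : ℕ, 1 ≤ n → ∀ x : ℕ → ℕ, Acceptable n x → ∀ k : ℕ, 1 ≤ k →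
    μ {ω | X n ω = k ∧ ∀ i < n, X i ω = x i} =
      (if k ≤ dmax n x then
        ENNReal.ofReal (((cnt n x k : ℝ) - χ) / ((n : ℝ) + ρ))
      else if k = dmax n x + 1 then
        ENNReal.ofReal (((dmax n x : ℝ) * χ + ρ) / ((n : ℝ) + ρ))
      else 0) * μ {ω | ∀ i < n, X i ω = x i}

/-- For a `(χ,ρ)`-attachment sequence with `χ < 1`, `ρ = 1 - χ`
(and `1/|χ|` a positive integer if `χ < 0`), the probability of any acceptable
sequence `(x 0, …, x (N-1))` is
`(∏_{j=0}^{d-1} (jχ+ρ) ∏_{k=1}^{d} ∏_{l=1}^{N_k-1} (l-χ)) / ∏_{n=0}^{N-1} (n+ρ)`,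
where `N_k` is the number of occurrences of `k` and `d` the maximal label;
in particular this probability depends on the sequence only through the counts. -/
lemma acceptable_prefix {N : ℕ} {x : ℕ → ℕ} (h : Acceptable (N + 1) x) :
    Acceptable N x :=
  ⟨fun i hi => h.1 i (hi.trans (Nat.lt_succ_self N)),
   fun _ => h.2.1 (Nat.succ_pos N),
   fun i hi => h.2.2 i (hi.trans (Nat.lt_succ_self N))⟩

lemma dmax_succ (N : ℕ) (x : ℕ → ℕ) : dmax (N + 1) x = max (x N) (dmax N x) := by
  simp [dmax, Finset.range_add_one]

lemma cnt_succ (N : ℕ) (x : ℕ → ℕ) (k : ℕ) :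
    cnt (N + 1) x k = cnt N x k + if x N = k then 1 else 0 := by
  unfold cnt
  rw [Finset.range_add_one, Finset.filter_insert]
  split
  · rw [Finset.card_insert_of_notMem (by simp)]
  · simp

lemma le_dmax {N i : ℕ} {x : ℕ → ℕ} (hi : i < N) : x i ≤ dmax N x :=
  Finset.le_sup (Finset.mem_range.2 hi)

lemma cnt_eq_zero {N k : ℕ} {x : ℕ → ℕ} (h : dmax N x < k) : cnt N x k = 0 := by
  unfold cnt
  rw [Finset.card_eq_zero, Finset.filter_eq_empty_iff]
  intro i hi
  have := le_dmax (x := x) (Finset.mem_range.1 hi)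
  omega

lemma cnt_pos {x : ℕ → ℕ} :
    ∀ N, 1 ≤ N → Acceptable N x → ∀ k, 1 ≤ k → k ≤ dmax N x → 0 < cnt N x k := by
  intro N
  induction N with
  | zero => omega
  | succ n ih =>
    intro _ hx k hk hkd
    rcases Nat.eq_zero_or_pos n with rfl | hn
    · have h0 : x 0 = 1 := hx.2.1 one_pos
      have hd1 : dmax (0 + 1) x = 1 := by simp [dmax, h0]
      have hk1 : k = 1 := by omega
      subst hk1
      have h01 : (0 : ℕ) ∈ (Finset.range (0 + 1)).filter fun i => x i = 1 := by simp [h0]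
      exact Finset.card_pos.2 ⟨0, h01⟩
    · have hxp := acceptable_prefix hx
      have hd := dmax_succ n x
      by_cases hkd' : k ≤ dmax n x
      · have h1 := ih hn hxp k hk hkd'
        have h2 := cnt_succ n x k
        split at h2 <;> omega
      · obtain ⟨m, rfl⟩ : ∃ m, n = m + 1 := ⟨n - 1, by omega⟩
        have hxn : x (m + 1) ≤ 1 + dmax (m + 1) x := hx.2.2 m (by omega)
        have hkx : k = x (m + 1) := by omega
        have h2 := cnt_succ (m + 1) x k
        rw [if_pos hkx.symm] at h2
        omega

theorem stmt1_attachment_probability {Ω : Type*} [MeasurableSpace Ω]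
    (μ : Measure Ω) [IsProbabilityMeasure μ] (χ ρ : ℝ)
    (hχ : χ < 1) (hρ : ρ = 1 - χ)
    (hint : χ < 0 → ∃ m : ℕ, 0 < m ∧ (m : ℝ) * |χ| = 1)
    (X : ℕ → Ω → ℕ) (hX : IsAttachmentSeq μ χ ρ X)
    (N : ℕ) (hN : 1 ≤ N) (x : ℕ → ℕ) (hx : Acceptable N x) :
    μ {ω | ∀ i < N, X i ω = x i} =
      ENNReal.ofReal
        (((∏ j ∈ Finset.range (dmax N x), ((j : ℝ) * χ + ρ)) *
            ∏ k ∈ Finset.Icc 1 (dmax N x),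
              ∏ l ∈ Finset.Icc 1 (cnt N x k - 1), ((l : ℝ) - χ)) /
          ∏ n ∈ Finset.range N, ((n : ℝ) + ρ)) := by
  have hρpos : 0 < ρ := by rw [hρ]; linarith
  have hD : ∀ M : ℕ, 0 < ∏ n ∈ Finset.range M, ((n : ℝ) + ρ) := fun M =>
    Finset.prod_pos fun i _ => add_pos_of_nonneg_of_pos (Nat.cast_nonneg i) hρpos
  revert hx
  induction N, hN using Nat.le_induction with
  | base =>
    intro hx
    have h0 : x 0 = 1 := hx.2.1 one_pos
    have hset : {ω | ∀ i < 1, X i ω = x i} = {ω | X 0 ω = 1} := by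
      ext ω; simp [Nat.lt_one_iff, h0]
    rw [hset, hX.2.1]
    have hd1 : dmax 1 x = 1 := by simp [dmax, h0]
    have hc1 : cnt 1 x 1 = 1 := by simp [cnt, Finset.range_one, Finset.filter_singleton, h0]
    rw [hd1, Finset.Icc_self, Finset.prod_singleton, hc1]
    simp only [Finset.range_one, Finset.prod_singleton, Nat.cast_zero, zero_mul, zero_add,
      Nat.sub_self, Finset.Icc_eq_empty_of_lt (by norm_num : (1:ℕ) > 0), Finset.prod_empty,
      mul_one]
    rw [div_self hρpos.ne']
    exact ENNReal.ofReal_one.symm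
  | succ n hn ih =>
    intro hx
    have hxp : Acceptable n x := acceptable_prefix hx
    have ihh := ih hxp
    have hxn1 : 1 ≤ x n := hx.1 n (Nat.lt_succ_self n)
    have hset : {ω | ∀ i < n + 1, X i ω = x i} =
        {ω | X n ω = x n ∧ ∀ i < n, X i ω = x i} := by
      ext ω
      constructor
      · intro h
        exact ⟨h n (Nat.lt_succ_self n), fun i hi => h i (hi.trans (Nat.lt_succ_self n))⟩
      · rintro ⟨h1, h2⟩ i hi
        rcases Nat.lt_succ_iff_lt_or_eq.1 hi with h | rfl
        · exact h2 i h
        · exact h1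
    rw [hset, hX.2.2 n hn x hxp (x n) hxn1, ihh]
    have hden : (0 : ℝ) < (n : ℝ) + ρ := add_pos_of_nonneg_of_pos (Nat.cast_nonneg n) hρpos
    have hDn := hD n
    rw [Finset.prod_range_succ fun m => ((m : ℝ) + ρ)]
    by_cases hc : x n ≤ dmax n x
    · -- existing label
      rw [if_pos hc]
      have hdm : dmax (n + 1) x = dmax n x := by rw [dmax_succ]; exact max_eq_right hc
      have hc1 : 1 ≤ cnt n x (x n) := cnt_pos n hn hxp (x n) hxn1 hc
      have key : ∏ k ∈ Finset.Icc 1 (dmax n x),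
            ∏ l ∈ Finset.Icc 1 (cnt (n + 1) x k - 1), ((l : ℝ) - χ)
          = (∏ k ∈ Finset.Icc 1 (dmax n x),
              ∏ l ∈ Finset.Icc 1 (cnt n x k - 1), ((l : ℝ) - χ)) *
              ((cnt n x (x n) : ℝ) - χ) := by
        have step : ∀ k ∈ Finset.Icc 1 (dmax n x),
            ∏ l ∈ Finset.Icc 1 (cnt (n + 1) x k - 1), ((l : ℝ) - χ)
              = (∏ l ∈ Finset.Icc 1 (cnt n x k - 1), ((l : ℝ) - χ)) *
                (if k = x n then ((cnt n x (x n) : ℝ) - χ) else 1) := by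
          intro k hk
          by_cases hkx : k = x n
          · subst hkx
            rw [if_pos rfl, cnt_succ, if_pos rfl, Nat.add_sub_cancel]
            obtain ⟨c', hc'⟩ : ∃ c', cnt n x (x n) = c' + 1 := ⟨cnt n x (x n) - 1, by omega⟩
            rw [hc', Finset.prod_Icc_succ_top (by omega), Nat.add_sub_cancel]
          · rw [if_neg hkx, cnt_succ, if_neg fun h => hkx h.symm, Nat.add_zero, mul_one]
        rw [Finset.prod_congr rfl step, Finset.prod_mul_distrib,
          Finset.prod_ite_eq' (Finset.Icc 1 (dmax n x)) (x n)
            (fun _ => ((cnt n x (x n) : ℝ) - χ)),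
          if_pos (Finset.mem_Icc.2 ⟨hxn1, hc⟩)]
      rw [hdm, key]
      have hnum : (0 : ℝ) ≤ ((cnt n x (x n) : ℝ) - χ) / ((n : ℝ) + ρ) := by
        apply div_nonneg _ hden.le
        have : (1 : ℝ) ≤ (cnt n x (x n) : ℝ) := by exact_mod_cast hc1
        linarith
      rw [← ENNReal.ofReal_mul hnum]
      congr 1
      field_simp
    · -- new label
      have hxn2 : x n ≤ 1 + dmax n x := by
        obtain ⟨m, rfl⟩ : ∃ m, n = m + 1 := ⟨n - 1, by omega⟩
        exact hx.2.2 m (by omega)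
      have hxe : x n = dmax n x + 1 := by omega
      rw [if_neg hc, if_pos hxe]
      have hdm : dmax (n + 1) x = dmax n x + 1 := by
        rw [dmax_succ, hxe]; exact max_eq_left (by omega)
      have key : ∏ k ∈ Finset.Icc 1 (dmax n x + 1),
            ∏ l ∈ Finset.Icc 1 (cnt (n + 1) x k - 1), ((l : ℝ) - χ)
          = ∏ k ∈ Finset.Icc 1 (dmax n x),
              ∏ l ∈ Finset.Icc 1 (cnt n x k - 1), ((l : ℝ) - χ) := by
        rw [Finset.prod_Icc_succ_top (by omega)]
        have h1 : cnt (n + 1) x (dmax n x + 1) = 1 := by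
          rw [cnt_succ, cnt_eq_zero (by omega), if_pos hxe]
        rw [h1]
        norm_num
        exact Finset.prod_congr rfl fun k hk => by
          have hk2 := (Finset.mem_Icc.1 hk).2
          rw [cnt_succ, if_neg (by omega), Nat.add_zero]
      rw [hdm, key, Finset.prod_range_succ fun j => ((j : ℝ) * χ + ρ)]
      by_cases hsign : 0 ≤ (dmax n x : ℝ) * χ + ρ
      · rw [← ENNReal.ofReal_mul (div_nonneg hsign hden.le)]
        congr 1
        field_simp
      · push_neg at hsign
        have hχneg : χ < 0 := by
          by_contra h
          push_neg at h
          have : (0 : ℝ) ≤ (dmax n x : ℝ) * χ := mul_nonneg (Nat.cast_nonneg _) h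
          linarith
        obtain ⟨m, hm0, hm1⟩ := hint hχneg
        have hmχ : (m : ℝ) * χ = -1 := by
          rw [abs_of_neg hχneg] at hm1; linarith
        have hρχ : ρ = -(((m : ℝ) + 1) * χ) := by rw [hρ]; linear_combination hmχ
        have h2 : ((dmax n x : ℝ) - ((m : ℝ) + 1)) * χ < 0 := by
          rw [hρχ] at hsign; linarith
        have hltn : m + 1 < dmax n x := by
          by_contra hcon
          push_neg at hcon
          have hle : (dmax n x : ℝ) ≤ (m : ℝ) + 1 := by exact_mod_cast hcon
          nlinarith [h2]
        have hA : ∏ j ∈ Finset.range (dmax n x), ((j : ℝ) * χ + ρ) = 0 := by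
          apply Finset.prod_eq_zero (Finset.mem_range.2 hltn)
          push_cast
          linear_combination hρχ
        rw [hA]
        simp
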